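/- arXiv:2412.03425 — 4 statements merged into one kernel-verified Lean document; each statement's English description precedes it below -/
import Mathlib

section
/- Let f be continuous, 1-periodic, with nonnegative Fourier coefficients a_n, and let μ be the uniform measure on the N equidistant points {k/N : 0 ≤ k ≤ N−1}. Then J(μ) − J(μ_L) = Σ_{n∈ℤ∖{0}} a_{nN}, i.e. the energy excess of the equidistant configuration equals the sum of the Fourier coefficients at multiples of N. -/
open MeasureTheory Complex Real
open scoped Real ENNReal

private lemma exp_arg_pow (n : ℤ) (N : ℕ) (hN : 1 ≤ N) (j : ℕ) :
    Complex.exp (2 * π * Complex.I * n * ((j : ℝ)/N : ℝ)) =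
      Complex.exp (2 * π * Complex.I * n / N) ^ j := by
  rw [← Complex.exp_nat_mul]
  congr 1
  have hN0 : (N : ℂ) ≠ 0 := Nat.cast_ne_zero.mpr (by omega)
  push_cast
  field_simp

private lemma geom_key (N : ℕ) (hN : 1 ≤ N) (n : ℤ) :
    (∑ j ∈ Finset.range N, Complex.exp (2 * π * Complex.I * n * ((j : ℝ)/N : ℝ)))
      = if (N : ℤ) ∣ n then (N : ℂ) else 0 := by
  have hN0 : (N : ℂ) ≠ 0 := Nat.cast_ne_zero.mpr (by omega)
  simp only [exp_arg_pow n N hN]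
  set ζ : ℂ := Complex.exp (2 * π * Complex.I * n / N) with hζ
  by_cases h : (N : ℤ) ∣ n
  · obtain ⟨m, rfl⟩ := h
    have hζ1 : ζ = 1 := by
      rw [hζ]
      have harg : (2 * (π:ℂ) * Complex.I * ((((N:ℤ) * m) : ℤ) : ℂ) / N : ℂ)
          = (m : ℂ) * (2 * ↑π * Complex.I) := by
        push_cast; field_simp
      rw [harg, Complex.exp_int_mul_two_pi_mul_I]
    simp [hζ1]
  · have hζN : ζ ^ N = 1 := by
      rw [hζ, ← Complex.exp_nat_mul]
      have harg : (N : ℂ) * (2 * ↑π * Complex.I * ↑n / ↑N) = (n : ℂ) * (2 * ↑π * Complex.I) := by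
        field_simp
      rw [harg, Complex.exp_int_mul_two_pi_mul_I]
    have h2 : (2 * (π:ℂ) * Complex.I) ≠ 0 := by
      simp [Real.pi_ne_zero, Complex.I_ne_zero, Complex.ofReal_ne_zero]
    have hζne : ζ ≠ 1 := by
      intro hone
      rw [hζ, Complex.exp_eq_one_iff] at hone
      obtain ⟨k, hk⟩ := hone
      apply h
      have hk' : (2*(π:ℂ)*Complex.I) * ((n:ℂ)/N) = (2*(π:ℂ)*Complex.I) * k := by
        rw [mul_div_assoc] at hk; rw [hk]; ring
      have hnk : (n:ℂ)/N = k := mul_left_cancel₀ h2 hk'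
      have hnk2 : (n:ℂ) = k * N := by field_simp at hnk; linear_combination hnk
      have : n = k * N := by exact_mod_cast hnk2
      exact ⟨k, by rw [this]; ring⟩
    rw [geom_sum_eq hζne, hζN]
    simp [h]

private lemma exp_integral_zero (n : ℤ) (hn : n ≠ 0) :
    ∫ x in Set.Icc (0:ℝ) 1, Complex.exp (2 * π * Complex.I * n * x) = 0 := by
  rw [MeasureTheory.integral_Icc_eq_integral_Ioc,
    ← intervalIntegral.integral_of_le (zero_le_one)]
  have hc : (2 * (π:ℂ) * Complex.I * n) ≠ 0 := by
    simp [Real.pi_ne_zero, Complex.I_ne_zero, Complex.ofReal_ne_zero, hn]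
  rw [integral_exp_mul_complex hc]
  have h1 : (2 * (π:ℂ) * Complex.I * n) * ((1:ℝ):ℂ) = (n : ℂ) * (2 * ↑π * Complex.I) := by
    push_cast; ring
  have h0 : (2 * (π:ℂ) * Complex.I * n) * ((0:ℝ):ℂ) = 0 := by push_cast; ring
  rw [h1, h0, Complex.exp_int_mul_two_pi_mul_I, Complex.exp_zero]
  simp

theorem stmt_3 (f : ℝ → ℝ) (a : ℤ → ℝ)
    (hcont : Continuous f)
    (hper : ∀ x : ℝ, f (x + 1) = f x)
    (ha : ∀ n : ℤ, 0 ≤ a n)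
    (hsum : Summable a)
    (hF : ∀ x : ℝ, (f x : ℂ) = ∑' n : ℤ, (a n : ℂ) * Complex.exp (2 * π * Complex.I * n * x))
    (N : ℕ) (hN : 1 ≤ N)
    (μ : Measure ℝ)
    (hμ : μ = ((N : ℝ≥0∞))⁻¹ • ∑ k ∈ Finset.range N, Measure.dirac ((k : ℝ) / N)) :
    (∫ x, ∫ y, f (x - y) ∂μ ∂μ)
      - (∫ x, ∫ y, f (x - y) ∂(volume.restrict (Set.Icc (0:ℝ) 1))
          ∂(volume.restrict (Set.Icc (0:ℝ) 1)))
      = ∑' n : ℤ, (if n = 0 then 0 else a (n * N)) := by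
  have hNR : (N : ℝ) ≠ 0 := Nat.cast_ne_zero.mpr (by omega)
  -- normwise summability
  have hnorm : ∀ x : ℝ, ∀ n : ℤ, ‖(a n : ℂ) * Complex.exp (2 * π * Complex.I * n * x)‖ = a n := by
    intro x n
    have harg : (2 * (π:ℂ) * Complex.I * n * x) = ((2 * π * n * x : ℝ) : ℂ) * Complex.I := by
      push_cast; ring
    rw [harg, norm_mul, Complex.norm_exp_ofReal_mul_I,
      mul_one, Complex.norm_real, Real.norm_of_nonneg (ha n)]
  have hsummc : ∀ x : ℝ, Summable (fun n : ℤ => (a n : ℂ) * Complex.exp (2 * π * Complex.I * n * x)) := by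
    intro x
    apply Summable.of_norm
    exact (hsum.congr (fun n => (hnorm x n).symm)).congr (fun n => rfl)
  -- Part 1: integral against μ
  have hdint : ∀ (g : ℝ → ℝ), Continuous g →
      ∫ x, g x ∂μ = (N:ℝ)⁻¹ * ∑ j ∈ Finset.range N, g ((j:ℝ)/N) := by
    intro g hg
    rw [hμ, integral_smul_measure, integral_finset_sum_measure]
    · simp only [integral_dirac, smul_eq_mul]
      congr 1
      simp [ENNReal.toReal_inv]
    · intro i _
      refine ⟨hg.aestronglyMeasurable, ?_⟩
      rw [hasFiniteIntegral_iff_norm]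
      simp [MeasureTheory.lintegral_dirac]
  have hinnerμ : ∀ x : ℝ, ∫ y, f (x - y) ∂μ = (N:ℝ)⁻¹ * ∑ k ∈ Finset.range N, f (x - (k:ℝ)/N) :=
    fun x => hdint (fun y => f (x - y)) (hcont.comp (continuous_const.sub continuous_id))
  have hJU : (∫ x, ∫ y, f (x - y) ∂μ ∂μ)
      = (N:ℝ)⁻¹ * ∑ j ∈ Finset.range N,
          ((N:ℝ)⁻¹ * ∑ k ∈ Finset.range N, f ((j:ℝ)/N - (k:ℝ)/N)) := by
    rw [show (fun x => ∫ y, f (x - y) ∂μ) = fun x => (N:ℝ)⁻¹ * ∑ k ∈ Finset.range N, f (x - (k:ℝ)/N) from funext hinnerμ]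
    exact hdint _ (by continuity)
  -- Part 2: the key computation
  have hNZ' : (N:ℤ) ≠ 0 := by exact_mod_cast (show N ≠ 0 by omega)
  have hNC : (N:ℂ) ≠ 0 := Nat.cast_ne_zero.mpr (by omega)
  have key : ((N:ℝ)⁻¹ * ∑ j ∈ Finset.range N,
          ((N:ℝ)⁻¹ * ∑ k ∈ Finset.range N, f ((j:ℝ)/N - (k:ℝ)/N)))
      = ∑' m : ℤ, a (m * N) := by
    rw [← Complex.ofReal_inj, Complex.ofReal_tsum]
    push_cast
    simp only [hF]
    have hswap1 : ∀ j ∈ Finset.range N,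
        ((N:ℂ)⁻¹ * ∑ k ∈ Finset.range N, ∑' n : ℤ,
          (a n : ℂ) * Complex.exp (2 * π * Complex.I * n * (((j:ℝ)/N - (k:ℝ)/N : ℝ) : ℂ)))
        = ∑' n : ℤ, (if (N:ℤ) ∣ n then
            (a n : ℂ) * Complex.exp (2 * π * Complex.I * n * ((((j:ℝ)/N) : ℝ) : ℂ)) else 0) := by
      intro j _
      rw [← Summable.tsum_finsetSum (fun k _ => hsummc _), ← tsum_mul_left]
      refine tsum_congr (fun n => ?_)
      have hterm : ∀ k ∈ Finset.range N,
          (a n : ℂ) * Complex.exp (2 * π * Complex.I * n * (((j:ℝ)/N - (k:ℝ)/N : ℝ) : ℂ))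
          = ((a n : ℂ) * Complex.exp (2 * π * Complex.I * n * ((((j:ℝ)/N) : ℝ) : ℂ)))
            * Complex.exp (2 * π * Complex.I * ((-n : ℤ) : ℂ) * ((((k:ℝ)/N) : ℝ) : ℂ)) := by
        intro k _
        rw [mul_assoc ((a n : ℂ)), ← Complex.exp_add]
        congr 2
        push_cast
        ring
      rw [Finset.sum_congr rfl hterm, ← Finset.mul_sum, geom_key N hN (-n)]
      by_cases h : (N:ℤ) ∣ n
      · rw [if_pos (dvd_neg.mpr h), if_pos h]
        field_simp
      · rw [if_neg (fun hc => h (dvd_neg.mp hc)), if_neg h, mul_zero, mul_zero]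
    rw [Finset.sum_congr rfl hswap1]
    have hsumite : ∀ j : ℕ, Summable (fun n : ℤ => if (N:ℤ) ∣ n then
        (a n : ℂ) * Complex.exp (2 * π * Complex.I * n * ((((j:ℝ)/N) : ℝ) : ℂ)) else 0) := by
      intro j
      refine Summable.of_norm_bounded hsum (fun n => ?_)
      by_cases h : (N:ℤ) ∣ n
      · rw [if_pos h, hnorm]
      · rw [if_neg h, norm_zero]; exact ha n
    rw [← Summable.tsum_finsetSum (fun j _ => hsumite j), ← tsum_mul_left]
    have hcount : ∀ n : ℤ, ((N:ℂ)⁻¹ * ∑ j ∈ Finset.range N, (if (N:ℤ) ∣ n then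
        (a n : ℂ) * Complex.exp (2 * π * Complex.I * n * ((((j:ℝ)/N) : ℝ) : ℂ)) else 0))
        = (if (N:ℤ) ∣ n then (a n : ℂ) else 0) := by
      intro n
      by_cases h : (N:ℤ) ∣ n
      · simp only [if_pos h]
        rw [← Finset.mul_sum, geom_key N hN n, if_pos h]
        field_simp
      · simp only [if_neg h]
        simp
    rw [tsum_congr hcount]
    symm
    have hinj : Function.Injective (fun m : ℤ => m * (N:ℤ)) := mul_left_injective₀ hNZ'
    have hsupp : Function.support (fun n : ℤ => if (N:ℤ) ∣ n then ((a n : ℂ)) else 0)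
        ⊆ Set.range (fun m : ℤ => m * (N:ℤ)) := by
      intro n hn
      by_cases h : (N:ℤ) ∣ n
      · obtain ⟨c, rfl⟩ := h
        exact ⟨c, by ring⟩
      · simp [Function.mem_support, if_neg h] at hn
    rw [← Function.Injective.tsum_eq hinj hsupp]
    refine tsum_congr (fun m => ?_)
    rw [if_pos (dvd_mul_left _ _)]
  -- Part 3: Lebesgue energy = a 0
  have hf0 : ∫ x in Set.Icc (0:ℝ) 1, f x = a 0 := by
    have hint : ∀ n : ℤ, Integrable (fun x : ℝ => (a n : ℂ) * Complex.exp (2 * π * Complex.I * n * x))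
        (volume.restrict (Set.Icc (0:ℝ) 1)) := by
      intro n
      apply Continuous.integrableOn_Icc
      exact continuous_const.mul (Complex.continuous_exp.comp (by continuity))
    have hnormint : Summable (fun n : ℤ => ∫ x in Set.Icc (0:ℝ) 1,
        ‖(a n : ℂ) * Complex.exp (2 * π * Complex.I * n * x)‖) := by
      refine hsum.congr (fun n => ?_)
      simp only [hnorm]
      simp [Real.volume_Icc]
    have hs := MeasureTheory.hasSum_integral_of_summable_integral_norm hint hnormint
    have hC : (∫ x in Set.Icc (0:ℝ) 1, ((f x : ℂ))) = (a 0 : ℂ) := by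
      calc (∫ x in Set.Icc (0:ℝ) 1, ((f x : ℂ)))
          = ∫ x in Set.Icc (0:ℝ) 1, ∑' n : ℤ, (a n : ℂ) * Complex.exp (2 * π * Complex.I * n * x) := by
            exact integral_congr_ae (Filter.Eventually.of_forall (fun x => hF x))
        _ = ∑' n : ℤ, ∫ x in Set.Icc (0:ℝ) 1, (a n : ℂ) * Complex.exp (2 * π * Complex.I * n * x) :=
            hs.tsum_eq.symm
        _ = ∑' n : ℤ, (if n = 0 then (a 0 : ℂ) else 0) := by
            refine tsum_congr (fun n => ?_)
            rw [MeasureTheory.integral_const_mul]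
            by_cases hn : n = 0
            · subst hn
              simp [Real.volume_Icc]
            · rw [exp_integral_zero n hn]
              simp [hn]
        _ = (a 0 : ℂ) := tsum_ite_eq 0 _
    have h2 : ((∫ x in Set.Icc (0:ℝ) 1, f x : ℝ) : ℂ) = ((a 0 : ℝ) : ℂ) := by
      exact (integral_ofReal (𝕜 := ℂ)).symm.trans hC
    exact_mod_cast h2
  have hinnerL : ∀ x : ℝ, ∫ y in Set.Icc (0:ℝ) 1, f (x - y) = a 0 := by
    intro x
    rw [MeasureTheory.integral_Icc_eq_integral_Ioc,
      ← intervalIntegral.integral_of_le zero_le_one,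
      intervalIntegral.integral_comp_sub_left f x]
    have hper' : Function.Periodic f 1 := hper
    have := hper'.intervalIntegral_add_eq (x - 1) 0
    simp only [sub_add_cancel, zero_add, sub_zero] at this ⊢
    rw [this, intervalIntegral.integral_of_le zero_le_one,
      ← MeasureTheory.integral_Icc_eq_integral_Ioc]
    exact hf0
  have hJL : (∫ x, ∫ y, f (x - y) ∂(volume.restrict (Set.Icc (0:ℝ) 1))
          ∂(volume.restrict (Set.Icc (0:ℝ) 1))) = a 0 := by
    rw [show (fun x => ∫ y, f (x - y) ∂(volume.restrict (Set.Icc (0:ℝ) 1))) = fun _ => a 0 from funext hinnerL]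
    simp [Real.volume_Icc]
  -- Finish
  rw [hJU, hJL, key]
  have hsub : Summable fun m : ℤ => a (m * N) :=
    hsum.comp_injective (mul_left_injective₀ hNZ')
  rw [Summable.tsum_eq_add_tsum_ite hsub 0]
  simp
end

section
/- Let N ≥ 2 and let δ ∈ ℝ^N satisfy Σ_{k=1}^N δ_k = 0. Define V_n ∈ ℂ^N by (V_n)_k = i(2πn/N) e^{iπn(2k−1)/N} for 1 ≤ n ≤ N−1. Then Σ_{n=1}^{⌊N/2⌋} (1/n²) |V_n · δ|² ≥ (2π²/N) ‖δ‖₂², where V_n · δ = Σ_k (V_n)_k δ_k. -/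
open Complex Real
open scoped Real

namespace Stmt10Aux

noncomputable def e (N : ℕ) (m : ℤ) : ℂ := Complex.exp (2 * (π : ℂ) * Complex.I * m / N)

lemma e_add (N : ℕ) (hN : 0 < N) (a b : ℤ) : e N (a + b) = e N a * e N b := by
  have hNC : (N : ℂ) ≠ 0 := Nat.cast_ne_zero.mpr hN.ne'
  rw [e, e, e, ← Complex.exp_add]
  congr 1
  field_simp
  push_cast
  ring

lemma e_zero (N : ℕ) : e N 0 = 1 := by simp [e]

lemma e_conj (N : ℕ) (m : ℤ) : (starRingEnd ℂ) (e N m) = e N (-m) := by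
  rw [e, e, ← Complex.exp_conj]
  congr 1
  simp [map_div₀, Complex.conj_I, map_ofNat]

lemma e_nat_mul (N : ℕ) (hN : 0 < N) (m : ℤ) (n : ℕ) : e N (m * n) = e N m ^ n := by
  rw [e, e, ← Complex.exp_nat_mul]
  congr 1
  push_cast
  ring

lemma e_N_mul (N : ℕ) (hN : 0 < N) (j : ℤ) : e N ((N : ℤ) * j) = 1 := by
  have hNC : (N : ℂ) ≠ 0 := Nat.cast_ne_zero.mpr hN.ne'
  rw [e]
  push_cast
  rw [show 2 * (π : ℂ) * Complex.I * ((N : ℂ) * (j : ℂ)) / N = (j : ℂ) * (2 * π * Complex.I) by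
    field_simp]
  exact Complex.exp_int_mul_two_pi_mul_I j

lemma geom (N : ℕ) (hN : 0 < N) (m : ℤ) (hm : ¬ (N : ℤ) ∣ m) :
    ∑ n ∈ Finset.range N, e N (m * n) = 0 := by
  have hNC : (N : ℂ) ≠ 0 := Nat.cast_ne_zero.mpr hN.ne'
  have h2πI : (2 : ℂ) * π * Complex.I ≠ 0 := by
    simp [Real.pi_ne_zero, Complex.I_ne_zero, Complex.ofReal_ne_zero]
  have hz : e N m ≠ 1 := by
    intro h
    rw [e, Complex.exp_eq_one_iff] at h
    obtain ⟨j, hj⟩ := h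
    apply hm ⟨j, ?_⟩
    have hm' : (m : ℂ) = (N : ℂ) * j := by
      field_simp at hj
      apply mul_left_cancel₀ h2πI
      linear_combination (2 * (π : ℂ) * Complex.I) * hj
    exact_mod_cast hm'
  have : ∀ n ∈ Finset.range N, e N (m * n) = e N m ^ n := fun n _ => e_nat_mul N hN m n
  rw [Finset.sum_congr rfl this, geom_sum_eq hz N]
  have hpow : e N m ^ N = 1 := by
    rw [← e_nat_mul N hN m N, mul_comm, e_N_mul N hN]
  rw [hpow, sub_self, zero_div]

lemma parseval (N : ℕ) (hN : 0 < N) (δ : Fin N → ℝ) :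
    ∑ n ∈ Finset.range N, Complex.normSq (∑ k : Fin N, e N (n * ((k : ℤ) + 1)) * δ k)
      = N * ∑ k, δ k ^ 2 := by
  set c : ℤ → ℂ := fun m => ∑ k : Fin N, e N (m * ((k : ℤ) + 1)) * δ k with hc
  have expand : ∀ n ∈ Finset.range N, c (n : ℤ) * (starRingEnd ℂ) (c (n : ℤ))
      = ∑ k : Fin N, ∑ l : Fin N, ((δ k * δ l : ℝ) : ℂ) * e N (((k : ℤ) - l) * n) := by
    intro n _
    rw [hc]
    simp only [map_sum]
    rw [Finset.sum_mul_sum]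
    refine Finset.sum_congr rfl fun k _ => Finset.sum_congr rfl fun l _ => ?_
    rw [map_mul, e_conj, Complex.conj_ofReal,
      show ((k : ℤ) - l) * n = (n : ℤ) * ((k : ℤ) + 1) + -((n : ℤ) * ((l : ℤ) + 1)) by ring,
      e_add N hN]
    push_cast
    ring
  have main : ∑ n ∈ Finset.range N, c (n : ℤ) * (starRingEnd ℂ) (c (n : ℤ))
      = (N : ℂ) * ∑ k : Fin N, ((δ k : ℂ)) ^ 2 := by
    rw [Finset.sum_congr rfl expand, Finset.sum_comm]
    have step : ∀ k : Fin N,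
        ∑ n ∈ Finset.range N, ∑ l : Fin N, ((δ k * δ l : ℝ) : ℂ) * e N (((k : ℤ) - l) * n)
          = (N : ℂ) * ((δ k : ℂ)) ^ 2 := by
      intro k
      rw [Finset.sum_comm, Finset.sum_eq_single k]
      · simp only [sub_self, zero_mul, e_zero, mul_one, Finset.sum_const,
          Finset.card_range, nsmul_eq_mul]
        push_cast
        ring
      · intro l _ hlk
        rw [← Finset.mul_sum, geom N hN _ ?_, mul_zero]
        rintro ⟨t, ht⟩
        have hk := k.isLt
        have hl := l.isLt
        have hlk' : (l : ℕ) ≠ (k : ℕ) := fun h => hlk (Fin.ext h)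
        have ht' : ((k : ℤ) - l).natAbs < N := by omega
        rw [ht, Int.natAbs_mul, Int.natAbs_natCast] at ht'
        have h0 : t = 0 := by
          rcases Nat.eq_zero_or_pos t.natAbs with h | h
          · exact Int.natAbs_eq_zero.mp h
          · exfalso
            have := Nat.mul_le_mul_left N h
            omega
        rw [h0, mul_zero] at ht
        omega
      · intro h
        exact absurd (Finset.mem_univ k) h
    rw [Finset.sum_congr rfl (fun k _ => step k), ← Finset.mul_sum]
  have castid : ((∑ n ∈ Finset.range N, Complex.normSq (c (n : ℤ)) : ℝ) : ℂ)
      = ((N * ∑ k, δ k ^ 2 : ℝ) : ℂ) := by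
    push_cast
    rw [← main]
    exact Finset.sum_congr rfl fun n _ => (Complex.mul_conj _).symm
  exact_mod_cast castid

lemma c_conj (N : ℕ) (hN : 0 < N) (δ : Fin N → ℝ) (m : ℤ) :
    (∑ k : Fin N, e N (((N : ℤ) - m) * ((k : ℤ) + 1)) * δ k)
      = (starRingEnd ℂ) (∑ k : Fin N, e N (m * ((k : ℤ) + 1)) * δ k) := by
  rw [map_sum]
  refine Finset.sum_congr rfl fun k _ => ?_
  rw [map_mul, e_conj, Complex.conj_ofReal]
  congr 1
  rw [show ((N : ℤ) - m) * ((k : ℤ) + 1) = (N : ℤ) * ((k : ℤ) + 1) + -(m * ((k : ℤ) + 1)) by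
    ring, e_add N hN, e_N_mul N hN, one_mul]

noncomputable def g (N : ℕ) (δ : Fin N → ℝ) (n : ℕ) : ℝ :=
  ‖∑ k : Fin N, e N (n * ((k : ℤ) + 1)) * δ k‖ ^ 2

lemma g_nonneg (N : ℕ) (δ : Fin N → ℝ) (n : ℕ) : 0 ≤ g N δ n := sq_nonneg _

lemma parseval' (N : ℕ) (hN : 0 < N) (δ : Fin N → ℝ) :
    ∑ n ∈ Finset.range N, g N δ n = N * ∑ k, δ k ^ 2 := by
  rw [← parseval N hN δ]
  exact Finset.sum_congr rfl fun n _ => by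
    rw [g, ← Complex.sq_norm]

lemma g_zero (N : ℕ) (δ : Fin N → ℝ) (hδ : ∑ k, δ k = 0) : g N δ 0 = 0 := by
  have h0 : (∑ k : Fin N, e N (((0 : ℕ) : ℤ) * ((k : ℤ) + 1)) * (δ k : ℂ)) = 0 := by
    simp only [Nat.cast_zero, zero_mul, e_zero, one_mul]
    exact_mod_cast congrArg (fun r : ℝ => (r : ℂ)) hδ
  rw [g, h0, norm_zero]
  norm_num

lemma g_sym (N : ℕ) (hN : 0 < N) (δ : Fin N → ℝ) (n : ℕ) (hn : n ≤ N) :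
    g N δ (N - n) = g N δ n := by
  rw [g, g]
  have hcast : ((N - n : ℕ) : ℤ) = (N : ℤ) - n := by omega
  rw [hcast, c_conj N hN δ n, Complex.norm_conj]

lemma key (N : ℕ) (hN : 2 ≤ N) (δ : Fin N → ℝ) (hδ : ∑ k, δ k = 0) :
    (N : ℝ) * ∑ k, δ k ^ 2 ≤ 2 * ∑ n ∈ Finset.Icc 1 (N / 2), g N δ n := by
  have hN0 : 0 < N := by omega
  have h1 : (1 : ℕ) ≤ N / 2 + 1 := by omega
  have h2 : N / 2 + 1 ≤ N := by omega
  have hpar := parseval' N hN0 δ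
  rw [Finset.range_eq_Ico, Finset.sum_eq_sum_Ico_succ_bot hN0, g_zero N δ hδ, zero_add,
    ← Finset.sum_Ico_consecutive _ h1 h2] at hpar
  have htail : ∑ n ∈ Finset.Ico (N / 2 + 1) N, g N δ n
      ≤ ∑ n ∈ Finset.Ico 1 (N / 2 + 1), g N δ n := by
    calc ∑ n ∈ Finset.Ico (N / 2 + 1) N, g N δ n
        = ∑ n ∈ Finset.Ico (N / 2 + 1) N, g N δ (N - n) :=
          Finset.sum_congr rfl fun n hn => by
            rw [Finset.mem_Ico] at hn
            exact (g_sym N hN0 δ n (by omega)).symm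
      _ = ∑ m ∈ (Finset.Ico (N / 2 + 1) N).image (N - ·), g N δ m := by
          rw [Finset.sum_image]
          intro a ha b hb hab
          rw [Finset.mem_coe, Finset.mem_Ico] at ha hb
          simp only at hab
          omega
      _ ≤ ∑ n ∈ Finset.Ico 1 (N / 2 + 1), g N δ n := by
          refine Finset.sum_le_sum_of_subset_of_nonneg ?_ fun i _ _ => g_nonneg N δ i
          intro m hm
          rw [Finset.mem_image] at hm
          obtain ⟨n, hn, rfl⟩ := hm
          rw [Finset.mem_Ico] at hn ⊢
          omega
  rw [← Finset.Ico_add_one_right_eq_Icc]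
  linarith

end Stmt10Aux

theorem stmt_10 (N : ℕ) (hN : 2 ≤ N) (δ : Fin N → ℝ)
    (hδ : ∑ k, δ k = 0)
    (V : ℕ → Fin N → ℂ)
    (hV : ∀ n : ℕ, ∀ k : Fin N,
      V n k = Complex.I * (2 * π * n / N)
        * Complex.exp (Complex.I * π * n * (2 * ((k : ℕ) + 1) - 1) / N)) :
    (2 * π ^ 2 / N) * ∑ k, δ k ^ 2
      ≤ ∑ n ∈ Finset.Icc 1 (N / 2),
          (1 / (n : ℝ) ^ 2) * ‖∑ k, V n k * (δ k : ℂ)‖ ^ 2 := by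
  have hN0 : 0 < N := by omega
  have hNR : (N : ℝ) ≠ 0 := Nat.cast_ne_zero.mpr hN0.ne'
  have hterm : ∀ n ∈ Finset.Icc 1 (N / 2),
      (1 / (n : ℝ) ^ 2) * ‖∑ k, V n k * (δ k : ℂ)‖ ^ 2
        = (4 * π ^ 2 / (N : ℝ) ^ 2) * Stmt10Aux.g N δ n := by
    intro n hn
    rw [Finset.mem_Icc] at hn
    have hnR : (n : ℝ) ≠ 0 := Nat.cast_ne_zero.mpr (by omega)
    have hsum : ∑ k, V n k * (δ k : ℂ)
        = Complex.I * ((2 * π * n / N : ℝ) : ℂ)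
            * Complex.exp (((-(π * n / N) : ℝ) : ℂ) * Complex.I)
            * ∑ k : Fin N, Stmt10Aux.e N (n * ((k : ℤ) + 1)) * δ k := by
      rw [Finset.mul_sum]
      refine Finset.sum_congr rfl fun k _ => ?_
      have hexp : Complex.exp (Complex.I * π * n * (2 * ((k : ℕ) + 1) - 1) / N)
          = Complex.exp (((-(π * n / N) : ℝ) : ℂ) * Complex.I)
              * Stmt10Aux.e N ((n : ℤ) * ((k : ℤ) + 1)) := by
        rw [Stmt10Aux.e, ← Complex.exp_add]
        congr 1
        push_cast
        field_simp
        ring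
      rw [hV n k, hexp]
      push_cast
      ring
    rw [hsum, norm_mul, norm_mul, norm_mul, Complex.norm_I, one_mul, Complex.norm_real,
      Complex.norm_exp_ofReal_mul_I, mul_one, Real.norm_eq_abs,
      _root_.abs_of_nonneg (by positivity), Stmt10Aux.g, mul_pow]
    field_simp
    ring
  rw [Finset.sum_congr rfl hterm, ← Finset.mul_sum]
  have hkey := Stmt10Aux.key N hN δ hδ
  have hpos : (0 : ℝ) ≤ 2 * π ^ 2 / (N : ℝ) ^ 2 := by positivity
  calc (2 * π ^ 2 / (N : ℝ)) * ∑ k, δ k ^ 2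
      = (2 * π ^ 2 / (N : ℝ) ^ 2) * ((N : ℝ) * ∑ k, δ k ^ 2) := by
        field_simp
    _ ≤ (2 * π ^ 2 / (N : ℝ) ^ 2) * (2 * ∑ n ∈ Finset.Icc 1 (N / 2), Stmt10Aux.g N δ n) :=
        mul_le_mul_of_nonneg_left hkey hpos
    _ = (4 * π ^ 2 / (N : ℝ) ^ 2) * ∑ n ∈ Finset.Icc 1 (N / 2), Stmt10Aux.g N δ n := by ring
end

section
/- Let f : ℝ² → ℝ be periodic with cell R = [0,√3]×[0,1], given by an absolutely convergent Fourier series f(x₁,x₂) = Σ_{(p,q)∈ℤ²} a_{pq} e^{2πi(p x₁/√3 + q x₂)} with a_{pq} ≥ 0. Let μ be the uniform measure on the 2L² triangular lattice points in R (as in the previous statement), and μ̃_L the normalized Lebesgue measure on R. Then J(μ) − J(μ̃_L) = (1/2) Σ_{(p,q)∈ℤ²∖{(0,0)}} [1 + (−1)^{p+q}] a_{Lp,Lq}. -/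
open MeasureTheory Complex Real
open scoped Real ENNReal

noncomputable def ee (pq : ℤ × ℤ) (x : ℝ × ℝ) : ℂ :=
  Complex.exp (2 * π * Complex.I
        * ((pq.1 : ℂ) * (x.1 : ℝ) / Real.sqrt 3 + (pq.2 : ℂ) * (x.2 : ℝ)))

lemma ee_def' (pq : ℤ × ℤ) (x : ℝ × ℝ) :
    ee pq x = Complex.exp (((2 * π * (pq.1 * x.1 / Real.sqrt 3 + pq.2 * x.2) : ℝ) : ℂ) * Complex.I) := by
  unfold ee; congr 1; push_cast; ring

lemma norm_ee (pq : ℤ × ℤ) (x : ℝ × ℝ) : ‖ee pq x‖ = 1 := by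
  rw [ee_def', Complex.norm_exp_ofReal_mul_I]

lemma cont_ee (pq : ℤ × ℤ) : Continuous (ee pq) := by
  unfold ee; fun_prop

lemma ee_neg (pq : ℤ × ℤ) (y : ℝ × ℝ) : ee pq (-y) = ee (-pq) y := by
  unfold ee
  simp only [Prod.fst_neg, Prod.snd_neg]
  congr 1
  push_cast
  ring

lemma ee_sub (pq : ℤ × ℤ) (x y : ℝ × ℝ) : ee pq (x - y) = ee pq x * ee pq (-y) := by
  unfold ee
  rw [← Complex.exp_add]
  congr 1
  simp only [Prod.fst_sub, Prod.snd_sub, Prod.fst_neg, Prod.snd_neg]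
  push_cast
  ring
lemma sum_exp_div (N : ℕ) (hN : 0 < N) (p : ℤ) :
    ∑ k ∈ Finset.range N, Complex.exp (2 * π * Complex.I * (p * k / N)) =
      if (N : ℤ) ∣ p then (N : ℂ) else 0 := by
  have hN0 : (N : ℂ) ≠ 0 := Nat.cast_ne_zero.2 hN.ne'
  have h2pi : (2 * (π : ℂ) * Complex.I) ≠ 0 := by
    simp [Real.pi_ne_zero, Complex.I_ne_zero, Complex.ofReal_ne_zero]
  have hx : ∀ k : ℕ, Complex.exp (2 * π * Complex.I * (p * k / N))
      = Complex.exp (2 * π * Complex.I * (p / N)) ^ k := by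
    intro k
    rw [← Complex.exp_nat_mul]
    congr 1
    ring
  simp_rw [hx]
  by_cases h : (N : ℤ) ∣ p
  · obtain ⟨m, rfl⟩ := h
    have h1 : Complex.exp (2 * π * Complex.I * ((((N : ℤ) * m : ℤ) : ℂ) / N)) = 1 := by
      rw [show (2 * (π:ℂ) * Complex.I * ((((N : ℤ) * m : ℤ) : ℂ) / N)) = (m : ℂ) * (2 * π * Complex.I) by
        push_cast; field_simp]
      exact Complex.exp_int_mul_two_pi_mul_I m
    rw [if_pos ⟨m, rfl⟩]
    push_cast at h1 ⊢
    simp [h1]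
  · have hx1 : Complex.exp (2 * π * Complex.I * (p / N)) ≠ 1 := by
      intro hc
      rw [Complex.exp_eq_one_iff] at hc
      obtain ⟨n, hn⟩ := hc
      apply h
      refine ⟨n, ?_⟩
      have : (p : ℂ) = (N : ℂ) * n := by
        field_simp at hn
        linear_combination hn
      exact_mod_cast this
    rw [geom_sum_eq hx1, if_neg h]
    have hXN : Complex.exp (2 * π * Complex.I * (p / N)) ^ N = 1 := by
      rw [← Complex.exp_nat_mul,
        show ((N:ℂ) * (2 * π * Complex.I * (p / N))) = (p : ℂ) * (2 * π * Complex.I) by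
          field_simp]
      exact Complex.exp_int_mul_two_pi_mul_I p
    rw [hXN]
    simp
noncomputable def pt (L : ℕ) (k j : ℕ) : ℝ × ℝ :=
  ((if Even j then Real.sqrt 3 * (k : ℝ) / L
            else Real.sqrt 3 * ((k : ℝ) + 1 / 2) / L),
           (j : ℝ) / (2 * L))

lemma sum_range_two_mul {M : Type*} [AddCommMonoid M] (n : ℕ) (g : ℕ → M) :
    ∑ j ∈ Finset.range (2 * n), g j = ∑ m ∈ Finset.range n, (g (2 * m) + g (2 * m + 1)) := by
  induction n with
  | zero => simp
  | succ n ih =>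
    rw [show 2 * (n + 1) = (2 * n + 1) + 1 by ring, Finset.sum_range_succ, Finset.sum_range_succ,
      Finset.sum_range_succ, ih, add_assoc]


lemma ee_pt (L : ℕ) (hL : 0 < L) (p q : ℤ) (k j : ℕ) :
    ee (p, q) (pt L k j)
      = Complex.exp (2 * π * Complex.I * (p * k / L))
        * ((if Even j then 1 else Complex.exp (π * Complex.I * (p / L)))
          * Complex.exp (2 * π * Complex.I * (q * j / (2 * L)))) := by
  have h3 : ((Real.sqrt 3 : ℝ) : ℂ) ≠ 0 := by
    simp [Real.sqrt_ne_zero']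
  have hL0 : (L : ℂ) ≠ 0 := Nat.cast_ne_zero.2 hL.ne'
  unfold ee pt
  by_cases hj : Even j
  · rw [if_pos hj, if_pos hj, mul_comm (Complex.exp _) _, one_mul, ← Complex.exp_add]
    congr 1
    push_cast
    field_simp
    ring
  · rw [if_neg hj, if_neg hj, ← Complex.exp_add, ← Complex.exp_add]
    congr 1
    push_cast
    field_simp
    ring

lemma S_eval (L : ℕ) (hL : 0 < L) (p q : ℤ) :
    ∑ k ∈ Finset.range L, ∑ j ∈ Finset.range (2 * L), ee (p, q) (pt L k j)
      = (if (L : ℤ) ∣ p then (L : ℂ) else 0)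
        * ((1 + Complex.exp (π * Complex.I * (p / L)) * Complex.exp (π * Complex.I * (q / L)))
          * (if (L : ℤ) ∣ q then (L : ℂ) else 0)) := by
  have hL0 : (L : ℂ) ≠ 0 := Nat.cast_ne_zero.2 hL.ne'
  simp_rw [ee_pt L hL p q]
  rw [← Finset.sum_mul_sum]
  rw [sum_exp_div L hL p]
  congr 1
  rw [sum_range_two_mul]
  have heven : ∀ m : ℕ, Even (2 * m) := fun m => even_two_mul m
  have hodd : ∀ m : ℕ, ¬ Even (2 * m + 1) := by
    intro m
    simp [Nat.even_add_one, heven m]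
  have key : ∀ m : ℕ,
      (if Even (2 * m) then (1:ℂ) else Complex.exp (π * Complex.I * (p / L)))
          * Complex.exp (2 * π * Complex.I * (q * (2 * m : ℕ) / (2 * L)))
        + (if Even (2 * m + 1) then 1 else Complex.exp (π * Complex.I * (p / L)))
          * Complex.exp (2 * π * Complex.I * (q * ((2 * m + 1 : ℕ)) / (2 * L)))
      = (1 + Complex.exp (π * Complex.I * (p / L)) * Complex.exp (π * Complex.I * (q / L)))
          * Complex.exp (2 * π * Complex.I * (q * m / L)) := by
    intro m
    rw [if_pos (heven m), if_neg (hodd m), one_mul]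
    have e1 : Complex.exp (2 * π * Complex.I * (q * (2 * m : ℕ) / (2 * L)))
        = Complex.exp (2 * π * Complex.I * (q * m / L)) := by
      congr 1; push_cast; field_simp
    have e2 : Complex.exp (2 * π * Complex.I * (q * ((2 * m + 1 : ℕ)) / (2 * L)))
        = Complex.exp (π * Complex.I * (q / L)) * Complex.exp (2 * π * Complex.I * (q * m / L)) := by
      rw [← Complex.exp_add]; congr 1; push_cast; field_simp; ring
    rw [e1, e2]
    ring
  simp_rw [key]
  rw [← Finset.mul_sum, sum_exp_div L hL q]

lemma exp_pi_I_int (L : ℕ) (hL : 0 < L) (p₁ : ℤ) :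
    Complex.exp (π * Complex.I * (((L : ℤ) * p₁ : ℤ) / (L : ℂ))) = (-1 : ℂ) ^ p₁ := by
  have hL0 : (L : ℂ) ≠ 0 := Nat.cast_ne_zero.2 hL.ne'
  rw [show ((π:ℂ) * Complex.I * (((L : ℤ) * p₁ : ℤ) / (L : ℂ))) = (p₁ : ℂ) * (π * Complex.I) by
    push_cast; field_simp]
  rw [Complex.exp_int_mul, Complex.exp_pi_mul_I]

lemma neg_one_zpow_sq (n : ℤ) : (-1 : ℂ) ^ n * (-1 : ℂ) ^ n = 1 := by
  rw [← zpow_add₀ (by norm_num : (-1:ℂ) ≠ 0)]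
  exact Even.neg_one_zpow ⟨n, rfl⟩

lemma neg_one_zpow_neg (n : ℤ) : (-1 : ℂ) ^ (-n) = (-1 : ℂ) ^ n := by
  rw [zpow_neg]
  exact inv_eq_of_mul_eq_one_left (neg_one_zpow_sq n)
lemma integrable_dirac' {E : Type*} [NormedAddCommGroup E]
    {g : ℝ × ℝ → E} (hg : Continuous g) (z : ℝ × ℝ) :
    Integrable g (Measure.dirac z) := by
  refine ⟨hg.aestronglyMeasurable, ?_⟩
  rw [HasFiniteIntegral, lintegral_dirac]
  exact ENNReal.coe_lt_top

lemma integral_mu {E : Type*} [NormedAddCommGroup E] [NormedSpace ℝ E] [CompleteSpace E]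
    (L : ℕ) (hL : 0 < L) (g : ℝ × ℝ → E) (hg : Continuous g) :
    ∫ x, g x ∂(((2 * (L : ℝ≥0∞) ^ 2))⁻¹ •
      ∑ k ∈ Finset.range L, ∑ j ∈ Finset.range (2 * L),
        Measure.dirac (pt L k j))
      = (2 * (L : ℝ) ^ 2)⁻¹ • ∑ k ∈ Finset.range L, ∑ j ∈ Finset.range (2 * L), g (pt L k j) := by
  rw [integral_smul_measure]
  have hint : ∀ (k : ℕ), Integrable g (∑ j ∈ Finset.range (2 * L), Measure.dirac (pt L k j)) := by
    intro k
    rw [integrable_finset_sum_measure]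
    exact fun j _ => integrable_dirac' hg _
  rw [integral_finset_sum_measure (fun k _ => hint k)]
  have : ∀ k ∈ Finset.range L,
      ∫ x, g x ∂(∑ j ∈ Finset.range (2 * L), Measure.dirac (pt L k j))
        = ∑ j ∈ Finset.range (2 * L), g (pt L k j) := by
    intro k _
    rw [integral_finset_sum_measure (fun j _ => integrable_dirac' hg _)]
    exact Finset.sum_congr rfl fun j _ => integral_dirac g _
  rw [Finset.sum_congr rfl this]
  congr 1
  simp [ENNReal.toReal_inv]
lemma two_pi_I_ne : (2 * (π:ℂ) * Complex.I) ≠ 0 := by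
  simp [Real.pi_ne_zero, Complex.I_ne_zero, Complex.ofReal_ne_zero]

lemma I2 (q : ℤ) : (∫ y in Set.Icc (0:ℝ) 1, Complex.exp (2 * π * Complex.I * (q * y)))
    = if q = 0 then 1 else 0 := by
  rw [integral_Icc_eq_integral_Ioc, ← intervalIntegral.integral_of_le zero_le_one]
  by_cases hq : q = 0
  · subst hq; simp
  · rw [if_neg hq]
    have hc : (2 * (π:ℂ) * Complex.I * q) ≠ 0 := by
      simp [Real.pi_ne_zero, Complex.I_ne_zero, Complex.ofReal_ne_zero, hq]
    have : ∀ y : ℝ, (2 * (π:ℂ) * Complex.I * (q * y)) = (2 * (π:ℂ) * Complex.I * q) * y := by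
      intro y; ring
    simp_rw [this]
    rw [integral_exp_mul_complex hc]
    rw [show (2 * (π:ℂ) * Complex.I * q) * (1:ℝ) = (q : ℂ) * (2 * π * Complex.I) by push_cast; ring]
    rw [Complex.exp_int_mul_two_pi_mul_I]
    simp

lemma I1 (p : ℤ) : (∫ x in Set.Icc (0:ℝ) (Real.sqrt 3),
      Complex.exp (2 * π * Complex.I * (p * x / Real.sqrt 3)))
    = if p = 0 then (Real.sqrt 3 : ℂ) else 0 := by
  have h3 : (Real.sqrt 3 : ℝ) ≠ 0 := by positivity
  have h3' : ((Real.sqrt 3 : ℝ) : ℂ) ≠ 0 := Complex.ofReal_ne_zero.2 h3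
  rw [integral_Icc_eq_integral_Ioc, ← intervalIntegral.integral_of_le (Real.sqrt_nonneg 3)]
  by_cases hp : p = 0
  · subst hp
    simp [Real.volume_Icc, Complex.real_smul]
  · rw [if_neg hp]
    have hc : (2 * (π:ℂ) * Complex.I * p / Real.sqrt 3) ≠ 0 := by
      apply div_ne_zero _ h3'
      simp [Real.pi_ne_zero, Complex.I_ne_zero, Complex.ofReal_ne_zero, hp]
    have : ∀ x : ℝ, (2 * (π:ℂ) * Complex.I * (p * x / Real.sqrt 3))
        = (2 * (π:ℂ) * Complex.I * p / Real.sqrt 3) * x := by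
      intro x; ring
    simp_rw [this]
    rw [integral_exp_mul_complex hc]
    rw [show (2 * (π:ℂ) * Complex.I * p / Real.sqrt 3) * (Real.sqrt 3 : ℝ)
        = (p : ℂ) * (2 * π * Complex.I) by field_simp]
    rw [Complex.exp_int_mul_two_pi_mul_I]
    simp
lemma ee_split (p q : ℤ) (x y : ℝ) :
    ee (p, q) (x, y) = Complex.exp (2 * π * Complex.I * (p * x / Real.sqrt 3))
      * Complex.exp (2 * π * Complex.I * (q * y)) := by
  unfold ee
  rw [← Complex.exp_add]
  congr 1
  push_cast
  ring

lemma Chat (p q : ℤ) :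
    (∫ x, ee (p, q) x ∂(ENNReal.ofReal (Real.sqrt 3)⁻¹ •
      volume.restrict (Set.Icc (0:ℝ) (Real.sqrt 3) ×ˢ Set.Icc (0:ℝ) 1)))
    = if (p, q) = (0 : ℤ × ℤ) then 1 else 0 := by
  have h3 : (0:ℝ) < Real.sqrt 3 := by positivity
  rw [integral_smul_measure, ENNReal.toReal_ofReal (by positivity)]
  have hInt : IntegrableOn (ee (p, q)) (Set.Icc (0:ℝ) (Real.sqrt 3) ×ˢ Set.Icc (0:ℝ) 1) volume :=
    (cont_ee (p,q)).continuousOn.integrableOn_compact (isCompact_Icc.prod isCompact_Icc)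
  rw [Measure.volume_eq_prod] at hInt ⊢
  rw [setIntegral_prod _ hInt]
  have hin : ∀ x : ℝ, (∫ y in Set.Icc (0:ℝ) 1, ee (p, q) (x, y))
      = Complex.exp (2 * π * Complex.I * (p * x / Real.sqrt 3)) * (if q = 0 then 1 else 0) := by
    intro x
    simp_rw [ee_split]
    rw [MeasureTheory.integral_const_mul, I2]
  simp_rw [hin]
  rw [MeasureTheory.integral_mul_const, I1]
  by_cases hp : p = 0 <;> by_cases hq : q = 0 <;>
    simp [hp, hq, Prod.ext_iff, smul_eq_mul] <;>
    field_simp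
lemma integrable_unit {ν : Measure (ℝ × ℝ)} [IsFiniteMeasure ν]
    {g : ℝ × ℝ → ℂ} (hg : Continuous g) (hn : ∀ x, ‖g x‖ = 1) : Integrable g ν :=
  (integrable_const (1:ℝ)).mono' hg.aestronglyMeasurable
    (Filter.Eventually.of_forall fun x => by rw [hn x])

lemma my_integral_ofReal {X : Type*} [MeasurableSpace X] {μ : Measure X} (f : X → ℝ) :
    ((∫ x, f x ∂μ : ℝ) : ℂ) = ∫ x, ((f x : ℝ) : ℂ) ∂μ := integral_ofReal.symm

lemma expand (f : ℝ × ℝ → ℝ) (a : ℤ × ℤ → ℝ) (ha : ∀ pq, 0 ≤ a pq) (hsum : Summable a)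
    (hF' : ∀ x : ℝ × ℝ, (f x : ℂ) = ∑' pq : ℤ × ℤ, (a pq : ℂ) * ee pq x)
    (ν : Measure (ℝ × ℝ)) [IsFiniteMeasure ν] :
    ((∫ x, ∫ y, f (x - y) ∂ν ∂ν : ℝ) : ℂ)
      = ∑' pq : ℤ × ℤ, (a pq : ℂ) * (∫ x, ee pq x ∂ν) * (∫ y, ee pq (-y) ∂ν) := by
  have intee : ∀ pq, Integrable (ee pq) ν := fun pq => integrable_unit (cont_ee pq) (norm_ee pq)
  have inteen : ∀ pq, Integrable (fun y => ee pq (-y)) ν := fun pq =>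
    integrable_unit ((cont_ee pq).comp continuous_neg) (fun y => norm_ee pq (-y))
  set T : ℝ := (ν Set.univ).toReal with hT
  have hT0 : 0 ≤ T := ENNReal.toReal_nonneg
  have hnormint : ∀ pq, ‖∫ y, ee pq (-y) ∂ν‖ ≤ T := by
    intro pq
    calc ‖∫ y, ee pq (-y) ∂ν‖ ≤ ∫ y, ‖ee pq (-y)‖ ∂ν := norm_integral_le_integral_norm _
    _ = T := by simp only [norm_ee]; rw [integral_const]; simp [hT, measureReal_def]
  have inner : ∀ x : ℝ × ℝ, ((∫ y, f (x - y) ∂ν : ℝ) : ℂ)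
      = ∑' pq : ℤ × ℤ, (a pq : ℂ) * ee pq x * (∫ y, ee pq (-y) ∂ν) := by
    intro x
    rw [my_integral_ofReal]
    have step1 : ∫ y, ((f (x - y) : ℝ) : ℂ) ∂ν
        = ∫ y, (∑' pq : ℤ × ℤ, (a pq : ℂ) * ee pq x * ee pq (-y)) ∂ν := by
      congr 1
      funext y
      rw [hF' (x - y)]
      exact tsum_congr fun pq => by rw [ee_sub, mul_assoc]
    rw [step1, ← integral_tsum_of_summable_integral_norm]
    · exact tsum_congr fun pq => by rw [MeasureTheory.integral_const_mul]
    · exact fun pq => (((inteen pq).const_mul _))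
    · apply Summable.congr (hsum.mul_left T)
      intro pq
      have : ∀ y, ‖(a pq : ℂ) * ee pq x * ee pq (-y)‖ = a pq := by
        intro y
        rw [norm_mul, norm_mul, norm_ee, norm_ee, Complex.norm_real,
          Real.norm_of_nonneg (ha pq)]
        ring
      simp only [this]
      rw [integral_const]
      simp [hT, mul_comm, measureReal_def]
  rw [my_integral_ofReal]
  have step2 : ∫ x, ((∫ y, f (x - y) ∂ν : ℝ) : ℂ) ∂ν
      = ∫ x, (∑' pq : ℤ × ℤ, (a pq : ℂ) * ee pq x * (∫ y, ee pq (-y) ∂ν)) ∂ν := by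
    congr 1
    funext x
    exact inner x
  rw [step2, ← integral_tsum_of_summable_integral_norm]
  · exact tsum_congr fun pq => by
      rw [MeasureTheory.integral_mul_const, MeasureTheory.integral_const_mul]
  · exact fun pq => ((intee pq).const_mul _).mul_const _
  · apply Summable.of_nonneg_of_le (fun pq => integral_nonneg fun x => norm_nonneg _)
      (fun pq => ?_) ((hsum.mul_left T).mul_left T)
    have : ∀ x, ‖(a pq : ℂ) * ee pq x * (∫ y, ee pq (-y) ∂ν)‖
        = a pq * ‖∫ y, ee pq (-y) ∂ν‖ := by
      intro x
      rw [norm_mul, norm_mul, norm_ee, Complex.norm_real, Real.norm_of_nonneg (ha pq)]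
      ring
    simp only [this]
    rw [integral_const]
    simp only [smul_eq_mul, ← hT]
    calc T * (a pq * ‖∫ y, ee pq (-y) ∂ν‖) ≤ T * (a pq * T) := by
          apply mul_le_mul_of_nonneg_left _ hT0
          exact mul_le_mul_of_nonneg_left (hnormint pq) (ha pq)
      _ = T * (T * a pq) := by ring

lemma quad_half (n : ℤ) : ((1 + (-1:ℂ)^n)/2) * ((1 + (-1:ℂ)^n)/2) = (1 + (-1:ℂ)^n)/2 := by
  linear_combination (neg_one_zpow_sq n) / 4

lemma ofReal_tsum' {ι : Type*} [Countable ι] (f : ι → ℝ) (hf : Summable f) :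
    ((∑' i, f i : ℝ) : ℂ) = ∑' i, (f i : ℂ) := by
  rw [← Complex.ofRealCLM_apply, ContinuousLinearMap.map_tsum _ hf]
  simp

lemma fin_muL (L : ℕ) (hL : 0 < L) :
    IsFiniteMeasure (((2 * (L : ℝ≥0∞) ^ 2))⁻¹ •
      ∑ k ∈ Finset.range L, ∑ j ∈ Finset.range (2 * L),
        Measure.dirac (pt L k j)) := by
  constructor
  rw [Measure.smul_apply]
  have : ((∑ k ∈ Finset.range L, ∑ j ∈ Finset.range (2 * L),
        Measure.dirac (pt L k j)) Set.univ) = (L * (2 * L) : ℕ) := by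
    simp [Measure.finset_sum_apply]
  rw [this, smul_eq_mul]
  apply ENNReal.mul_lt_top
  · rw [ENNReal.inv_lt_top]
    exact ENNReal.mul_pos (by norm_num) (pow_ne_zero 2 (by exact_mod_cast hL.ne'))
  · exact ENNReal.natCast_lt_top _

lemma fin_muT :
    IsFiniteMeasure (ENNReal.ofReal (Real.sqrt 3)⁻¹ •
      volume.restrict (Set.Icc (0:ℝ) (Real.sqrt 3) ×ˢ Set.Icc (0:ℝ) 1)) := by
  constructor
  rw [Measure.smul_apply, Measure.restrict_apply MeasurableSet.univ, Set.univ_inter, smul_eq_mul]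
  apply ENNReal.mul_lt_top ENNReal.ofReal_lt_top
  exact ((isCompact_Icc.prod isCompact_Icc).measure_lt_top)

lemma Mhat_dvd (L : ℕ) (hL : 0 < L) (p₁ q₁ : ℤ) :
    (∫ x, ee ((L : ℤ) * p₁, (L : ℤ) * q₁) x ∂(((2 * (L : ℝ≥0∞) ^ 2))⁻¹ •
      ∑ k ∈ Finset.range L, ∑ j ∈ Finset.range (2 * L),
        Measure.dirac (pt L k j)))
      = (1 + (-1:ℂ) ^ (p₁ + q₁)) / 2 := by
  have hL0 : (L : ℂ) ≠ 0 := Nat.cast_ne_zero.2 hL.ne'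
  rw [integral_mu L hL _ (cont_ee _), S_eval L hL,
    if_pos ⟨p₁, rfl⟩, if_pos ⟨q₁, rfl⟩, exp_pi_I_int L hL p₁, exp_pi_I_int L hL q₁,
    ← zpow_add₀ (by norm_num : (-1:ℂ) ≠ 0)]
  rw [Complex.real_smul]
  push_cast
  field_simp

lemma Mhat_ndvd (L : ℕ) (hL : 0 < L) (p q : ℤ) (h : ¬((L : ℤ) ∣ p ∧ (L : ℤ) ∣ q)) :
    (∫ x, ee (p, q) x ∂(((2 * (L : ℝ≥0∞) ^ 2))⁻¹ •
      ∑ k ∈ Finset.range L, ∑ j ∈ Finset.range (2 * L),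
        Measure.dirac (pt L k j))) = 0 := by
  rw [integral_mu L hL _ (cont_ee _), S_eval L hL]
  rcases not_and_or.1 h with h' | h' <;> simp [h']


theorem stmt_12 (f : ℝ × ℝ → ℝ) (a : ℤ × ℤ → ℝ)
    (hcont : Continuous f)
    (ha : ∀ pq : ℤ × ℤ, 0 ≤ a pq)
    (hsum : Summable a)
    (hF : ∀ x : ℝ × ℝ, (f x : ℂ) = ∑' pq : ℤ × ℤ,
      (a pq : ℂ) * Complex.exp (2 * π * Complex.I
        * ((pq.1 : ℂ) * (x.1 : ℝ) / Real.sqrt 3 + (pq.2 : ℂ) * (x.2 : ℝ))))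
    (L : ℕ) (hL : 1 ≤ L)
    (μ μtilde : Measure (ℝ × ℝ))
    (hμ : μ = ((2 * (L : ℝ≥0∞) ^ 2))⁻¹ •
      ∑ k ∈ Finset.range L, ∑ j ∈ Finset.range (2 * L),
        Measure.dirac
          ((if Even j then Real.sqrt 3 * (k : ℝ) / L
            else Real.sqrt 3 * ((k : ℝ) + 1 / 2) / L),
           (j : ℝ) / (2 * L)))
    (hμt : μtilde = ENNReal.ofReal (Real.sqrt 3)⁻¹ •
      volume.restrict (Set.Icc (0:ℝ) (Real.sqrt 3) ×ˢ Set.Icc (0:ℝ) 1)) :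
    (∫ x, ∫ y, f (x - y) ∂μ ∂μ) - (∫ x, ∫ y, f (x - y) ∂μtilde ∂μtilde)
      = (1 / 2) * ∑' pq : ℤ × ℤ,
          (if pq = 0 then 0
           else (1 + (-1 : ℝ) ^ (pq.1 + pq.2)) * a (L * pq.1, L * pq.2)) := by

  have hL0 : 0 < L := hL
  have hLZ : ((L : ℤ)) ≠ 0 := by exact_mod_cast hL0.ne'
  have hμ2 : μ = ((2 * (L : ℝ≥0∞) ^ 2))⁻¹ •
      ∑ k ∈ Finset.range L, ∑ j ∈ Finset.range (2 * L), Measure.dirac (pt L k j) := hμ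
  haveI : IsFiniteMeasure μ := hμ2 ▸ fin_muL L hL0
  haveI : IsFiniteMeasure μtilde := hμt ▸ fin_muT
  have hF' : ∀ x : ℝ × ℝ, (f x : ℂ) = ∑' pq : ℤ × ℤ, (a pq : ℂ) * ee pq x := hF
  have E1 := expand f a ha hsum hF' μ
  have E2 := expand f a ha hsum hF' μtilde
  -- μtilde side
  have hB : ∀ pq : ℤ × ℤ,
      (a pq : ℂ) * (∫ x, ee pq x ∂μtilde) * (∫ y, ee pq (-y) ∂μtilde)
        = if pq = 0 then (a 0 : ℂ) else 0 := by
    rintro ⟨p, q⟩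
    have h1 : (∫ x, ee (p, q) x ∂μtilde) = if (p, q) = (0 : ℤ × ℤ) then 1 else 0 := by
      rw [hμt]; exact Chat p q
    have h2 : (∫ y, ee (p, q) (-y) ∂μtilde) = if (p, q) = (0 : ℤ × ℤ) then 1 else 0 := by
      rw [hμt]
      simp_rw [ee_neg]
      rw [show (-(p, q) : ℤ × ℤ) = (-p, -q) from rfl, Chat (-p) (-q)]
      simp [Prod.ext_iff]
    rw [h1, h2]
    by_cases h : (p, q) = (0 : ℤ × ℤ)
    · rw [Prod.mk_eq_zero] at h
      obtain ⟨rfl, rfl⟩ := h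
      simp
      rfl
    · simp [h]
  have hJt : ((∫ x, ∫ y, f (x - y) ∂μtilde ∂μtilde : ℝ) : ℂ) = (a 0 : ℂ) := by
    rw [E2, tsum_congr hB]
    exact tsum_ite_eq 0 _
  -- μ side
  set φ : ℤ × ℤ → ℤ × ℤ := fun w => ((L : ℤ) * w.1, (L : ℤ) * w.2) with hφ
  have hφinj : Function.Injective φ := by
    rintro ⟨p, q⟩ ⟨p', q'⟩ h
    simp only [hφ, Prod.mk.injEq] at h
    exact Prod.ext (mul_left_cancel₀ hLZ h.1) (mul_left_cancel₀ hLZ h.2)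
  set A : ℤ × ℤ → ℂ := fun pq =>
    (a pq : ℂ) * (∫ x, ee pq x ∂μ) * (∫ y, ee pq (-y) ∂μ) with hA
  set G : ℤ × ℤ → ℂ := fun w =>
    (a ((L : ℤ) * w.1, (L : ℤ) * w.2) : ℂ) * ((1 + (-1:ℂ) ^ (w.1 + w.2)) / 2) with hG
  have hAφ : ∀ w : ℤ × ℤ, A (φ w) = G w := by
    rintro ⟨p₁, q₁⟩
    have h1 : (∫ x, ee ((L : ℤ) * p₁, (L : ℤ) * q₁) x ∂μ)
        = (1 + (-1:ℂ) ^ (p₁ + q₁)) / 2 := by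
      rw [hμ2]; exact Mhat_dvd L hL0 p₁ q₁
    have h2 : (∫ y, ee ((L : ℤ) * p₁, (L : ℤ) * q₁) (-y) ∂μ)
        = (1 + (-1:ℂ) ^ (p₁ + q₁)) / 2 := by
      rw [hμ2]
      simp_rw [ee_neg]
      rw [show (-(((L:ℤ) * p₁, (L:ℤ) * q₁)) : ℤ × ℤ) = ((L:ℤ) * (-p₁), (L:ℤ) * (-q₁)) by
        simp [Prod.ext_iff, mul_neg]]
      rw [Mhat_dvd L hL0 (-p₁) (-q₁),
        show (-p₁ + -q₁) = -(p₁ + q₁) by ring, neg_one_zpow_neg]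
    simp only [hA, hG, hφ]
    rw [h1, h2, mul_assoc, quad_half]
  have hA0 : ∀ pq : ℤ × ℤ, pq ∉ Set.range φ → A pq = 0 := by
    rintro ⟨p, q⟩ hpq
    by_cases h : ((L : ℤ) ∣ p ∧ (L : ℤ) ∣ q)
    · exfalso
      obtain ⟨⟨p₁, hp⟩, ⟨q₁, hq⟩⟩ := h
      exact hpq ⟨(p₁, q₁), by simp [hφ, hp, hq]⟩
    · have h1 : (∫ x, ee (p, q) x ∂μ) = 0 := by
        rw [hμ2]; exact Mhat_ndvd L hL0 p q h
      simp only [hA]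
      rw [h1, mul_zero, zero_mul]
  have hGsum : Summable G := by
    apply Summable.of_norm_bounded (hsum.comp_injective hφinj)
    rintro ⟨p₁, q₁⟩
    simp only [hG, Function.comp_apply, hφ]
    rw [norm_mul, Complex.norm_real, Real.norm_of_nonneg (ha _)]
    have : ‖(1 + (-1:ℂ) ^ (p₁ + q₁)) / 2‖ ≤ 1 := by
      rcases Int.even_or_odd (p₁ + q₁) with h | h
      · rw [h.neg_one_zpow]; norm_num
      · rw [h.neg_one_zpow]; norm_num
    calc a ((L:ℤ) * p₁, (L:ℤ) * q₁) * ‖(1 + (-1:ℂ) ^ (p₁ + q₁)) / 2‖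
        ≤ a ((L:ℤ) * p₁, (L:ℤ) * q₁) * 1 := mul_le_mul_of_nonneg_left this (ha _)
      _ = a ((L:ℤ) * p₁, (L:ℤ) * q₁) := mul_one _
  have hG0 : G 0 = (a 0 : ℂ) := by
    simp only [hG]
    norm_num
    rfl
  have hJm : ((∫ x, ∫ y, f (x - y) ∂μ ∂μ : ℝ) : ℂ) = ∑' w, G w := by
    rw [E1, ← hφinj.tsum_eq (Function.support_subset_iff'.2 hA0)]
    exact tsum_congr hAφ
  -- RHS
  have hRsum : Summable (fun pq : ℤ × ℤ =>
      (if pq = 0 then (0:ℝ) else (1 + (-1 : ℝ) ^ (pq.1 + pq.2)) * a (L * pq.1, L * pq.2))) := by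
    apply Summable.of_norm_bounded ((hsum.comp_injective hφinj).mul_left 2)
    rintro ⟨p₁, q₁⟩
    by_cases h : ((p₁, q₁) : ℤ × ℤ) = 0
    · rw [if_pos h, norm_zero]
      exact mul_nonneg (by norm_num) (ha _)
    · rw [if_neg h]
      simp only [Function.comp_apply, hφ]
      rw [Real.norm_eq_abs, abs_mul, _root_.abs_of_nonneg (ha _)]
      have : |1 + (-1:ℝ) ^ (p₁ + q₁)| ≤ 2 := by
        rcases Int.even_or_odd (p₁ + q₁) with h' | h'
        · rw [h'.neg_one_zpow]; norm_num
        · rw [h'.neg_one_zpow]; norm_num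
      calc |1 + (-1:ℝ) ^ (p₁ + q₁)| * a ((L:ℤ) * p₁, (L:ℤ) * q₁)
          ≤ 2 * a ((L:ℤ) * p₁, (L:ℤ) * q₁) := mul_le_mul_of_nonneg_right this (ha _)
        _ = _ := rfl
  apply Complex.ofReal_injective
  rw [Complex.ofReal_sub, hJm, hJt, Complex.ofReal_mul, ofReal_tsum' _ hRsum]
  rw [Summable.tsum_eq_add_tsum_ite hGsum 0, hG0]
  rw [← tsum_mul_left]
  rw [add_sub_cancel_left]
  apply tsum_congr
  rintro ⟨p₁, q₁⟩
  by_cases h : ((p₁, q₁) : ℤ × ℤ) = 0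
  · simp [h]
  · rw [if_neg h, if_neg h]
    simp only [hG]
    push_cast
    ring
end

section
/- Let (a_n)_{n≥1} be positive reals satisfying a_{2k} ≤ a_k / (2k) for all sufficiently large k (a consequence of rapid decay), and the doubling-type condition max_{1≤m≤k} 1/(m²a_m) ≤ C₀/(k²a_k). Then there exists C > 0 such that for all sufficiently large N, Σ_{n=1}^∞ n² a_{nN} ≤ (C/N) a_{N/2} (with N even). -/
theorem stmt_17 (a : ℕ → ℝ) (ha : ∀ n, 1 ≤ n → 0 < a n)
    (C₀ : ℝ) (hC₀ : 0 < C₀)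
    (hdecay : ∃ K : ℕ, ∀ k ≥ K, 1 ≤ k → a (2 * k) ≤ a k / (2 * k))
    (hdouble : ∀ k : ℕ, 1 ≤ k → ∀ m : ℕ, 1 ≤ m → m ≤ k →
      1 / ((m : ℝ) ^ 2 * a m) ≤ C₀ / ((k : ℝ) ^ 2 * a k)) :
    ∃ C : ℝ, 0 < C ∧ ∃ N₀ : ℕ, ∀ N : ℕ, N₀ ≤ N → Even N →
      (∑' n : ℕ, ((n : ℝ) + 1) ^ 2 * a ((n + 1) * N)) ≤ (C / N) * a (N / 2) := by
  obtain ⟨K, hK⟩ := hdecay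
  -- summability of 1/(n+1)^2
  have hsum : Summable (fun n : ℕ => 1 / ((n : ℝ) + 1) ^ 2) := by
    have h1 : Summable (fun n : ℕ => 1 / (n : ℝ) ^ 2) :=
      Real.summable_one_div_nat_pow.mpr (by norm_num)
    have h2 := (summable_nat_add_iff 1).mpr h1
    refine h2.congr ?_
    intro n
    push_cast
    ring
  set S : ℝ := ∑' n : ℕ, 1 / ((n : ℝ) + 1) ^ 2 with hS
  have hSpos : 0 < S := Summable.tsum_pos hsum (fun n => by positivity) 0 (by norm_num)
  -- rearranged doubling
  have hdouble' : ∀ k : ℕ, 1 ≤ k → ∀ m : ℕ, 1 ≤ m → m ≤ k →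
      (k : ℝ) ^ 2 * a k ≤ C₀ * ((m : ℝ) ^ 2 * a m) := by
    intro k hk m hm hmk
    have h := hdouble k hk m hm hmk
    have hmR : (0:ℝ) < (m:ℝ) := by exact_mod_cast hm
    have hkR : (0:ℝ) < (k:ℝ) := by exact_mod_cast hk
    have hm' : 0 < (m:ℝ)^2 * a m := mul_pos (by positivity) (ha m hm)
    have hk' : 0 < (k:ℝ)^2 * a k := mul_pos (by positivity) (ha k hk)
    rw [div_le_div_iff₀ hm' hk'] at h
    linarith
  -- chain of decays
  have hchain : ∀ N : ℕ, K ≤ N → 1 ≤ N → ∀ j : ℕ,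
      a (2 ^ j * N) ≤ a N / (N : ℝ) ^ j := by
    intro N hKN hN1 j
    have hNR : (0:ℝ) < (N:ℝ) := by exact_mod_cast hN1
    induction j with
    | zero => simp
    | succ j ih =>
      have hpos : 0 < 2 ^ j * N := Nat.mul_pos (Nat.two_pow_pos j) hN1
      have h1 : 1 ≤ 2 ^ j * N := hpos
      have hK2 : K ≤ 2 ^ j * N := le_trans hKN (Nat.le_mul_of_pos_left N (Nat.two_pow_pos j))
      have hd := hK (2 ^ j * N) hK2 h1
      have heq : 2 ^ (j + 1) * N = 2 * (2 ^ j * N) := by ring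
      rw [heq]
      have hMR : (0:ℝ) < ((2 ^ j * N : ℕ) : ℝ) := by exact_mod_cast hpos
      have hapos : 0 < a (2 ^ j * N) := ha _ h1
      have hNle : (N : ℝ) ≤ 2 * ((2 ^ j * N : ℕ) : ℝ) := by
        have : (N : ℝ) ≤ ((2 ^ j * N : ℕ) : ℝ) := by
          exact_mod_cast Nat.le_mul_of_pos_left N (Nat.two_pow_pos j)
        linarith
      have step1 : a (2 ^ j * N) / (2 * ((2 ^ j * N : ℕ) : ℝ)) ≤ a (2 ^ j * N) / (N : ℝ) := by
        gcongr
      have step2 : a (2 ^ j * N) / (N : ℝ) ≤ (a N / (N : ℝ) ^ j) / (N : ℝ) := by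
        gcongr
      calc a (2 * (2 ^ j * N)) ≤ a (2 ^ j * N) / (2 * ((2 ^ j * N : ℕ) : ℝ)) := hd
        _ ≤ a (2 ^ j * N) / (N : ℝ) := step1
        _ ≤ (a N / (N : ℝ) ^ j) / (N : ℝ) := step2
        _ = a N / (N : ℝ) ^ (j + 1) := by rw [div_div, ← pow_succ]
  -- per term bound
  have hterm : ∀ N : ℕ, K ≤ N → 64 ≤ N → ∀ ν : ℕ, 1 ≤ ν →
      (ν : ℝ) ^ 2 * a (ν * N) ≤ 16 * C₀ * a N / (ν : ℝ) ^ 2 := by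
    intro N hKN hN64 ν hν
    have hN1 : 1 ≤ N := by omega
    have hNR : (0:ℝ) < (N:ℝ) := by exact_mod_cast hN1
    set j := Nat.log 2 ν with hj
    have h1 : 2 ^ j ≤ ν := Nat.pow_log_le_self 2 (by omega)
    have h2 : ν < 2 ^ (j + 1) := Nat.lt_pow_succ_log_self (by norm_num) ν
    have hm1 : 1 ≤ 2 ^ j * N := Nat.mul_pos (Nat.two_pow_pos j) hN1
    have hk1 : 1 ≤ ν * N := Nat.mul_pos hν hN1
    have hmk : 2 ^ j * N ≤ ν * N := Nat.mul_le_mul_right N h1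
    have hd := hdouble' (ν * N) hk1 (2 ^ j * N) hm1 hmk
    push_cast at hd
    -- hd : (ν*N)^2 * a (ν*N) ≤ C₀ * ((2^j*N)^2 * a (2^j*N))
    have hd2 : (ν : ℝ) ^ 2 * a (ν * N) ≤ C₀ * ((2:ℝ) ^ j) ^ 2 * a (2 ^ j * N) := by
      have hN2 : (0:ℝ) < (N:ℝ)^2 := by positivity
      rw [mul_pow, mul_pow] at hd
      nlinarith [ha (ν * N) hk1, ha (2 ^ j * N) hm1]
    have hc := hchain N hKN hN1 j
    have hapos : 0 < a (2 ^ j * N) := ha _ hm1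
    have haN : 0 < a N := ha N hN1
    -- (2^j)^2 = 4^j
    have h4 : ((2:ℝ) ^ j) ^ 2 = (4:ℝ) ^ j := by
      rw [← pow_mul, pow_mul']; norm_num
    have hd3 : (ν : ℝ) ^ 2 * a (ν * N) ≤ C₀ * (4:ℝ) ^ j * (a N / (N : ℝ) ^ j) := by
      calc (ν : ℝ) ^ 2 * a (ν * N) ≤ C₀ * ((2:ℝ) ^ j) ^ 2 * a (2 ^ j * N) := hd2
        _ = C₀ * (4:ℝ) ^ j * a (2 ^ j * N) := by rw [h4]
        _ ≤ C₀ * (4:ℝ) ^ j * (a N / (N : ℝ) ^ j) := by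
            apply mul_le_mul_of_nonneg_left hc (by positivity)
    -- N^j ≥ 64^j
    have hNj : (64:ℝ) ^ j ≤ (N : ℝ) ^ j := by
      apply pow_le_pow_left₀ (by norm_num)
      exact_mod_cast hN64
    have h64pos : (0:ℝ) < (64:ℝ) ^ j := by positivity
    have hNjpos : (0:ℝ) < (N:ℝ) ^ j := by positivity
    have hd4 : (ν : ℝ) ^ 2 * a (ν * N) ≤ C₀ * a N / (16:ℝ) ^ j := by
      have hr : (4:ℝ) ^ j / (N : ℝ) ^ j ≤ 1 / (16:ℝ) ^ j := by
        rw [div_le_div_iff₀ hNjpos (by positivity)]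
        have hmm : (4:ℝ) ^ j * (16:ℝ) ^ j = (64:ℝ) ^ j := by
          rw [← mul_pow]; norm_num
        rw [hmm, one_mul]
        exact hNj
      have key : (4:ℝ) ^ j * (a N / (N : ℝ) ^ j) ≤ a N / (16:ℝ) ^ j := by
        calc (4:ℝ) ^ j * (a N / (N : ℝ) ^ j) = a N * ((4:ℝ) ^ j / (N : ℝ) ^ j) := by ring
          _ ≤ a N * (1 / (16:ℝ) ^ j) := mul_le_mul_of_nonneg_left hr haN.le
          _ = a N / (16:ℝ) ^ j := by ring
      calc (ν : ℝ) ^ 2 * a (ν * N) ≤ C₀ * ((4:ℝ) ^ j * (a N / (N : ℝ) ^ j)) := by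
            linarith [hd3, mul_assoc C₀ ((4:ℝ)^j) (a N / (N:ℝ)^j)]
        _ ≤ C₀ * (a N / (16:ℝ) ^ j) := mul_le_mul_of_nonneg_left key hC₀.le
        _ = C₀ * a N / (16:ℝ) ^ j := by ring
    -- ν^2 ≤ 16 * 16^j
    have hν2 : ((ν:ℝ)) ^ 2 ≤ 16 * (16:ℝ) ^ j := by
      have hνle : (ν:ℝ) ≤ (2:ℝ) ^ (j+1) := by
        have : (ν:ℝ) ≤ ((2^(j+1) : ℕ) : ℝ) := by exact_mod_cast h2.le
        simpa using this
      have hνnn : (0:ℝ) ≤ (ν:ℝ) := by positivity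
      have : ((ν:ℝ))^2 ≤ ((2:ℝ)^(j+1))^2 := pow_le_pow_left₀ hνnn hνle 2
      have h44 : ((2:ℝ)^(j+1))^2 = (4:ℝ)^(j+1) := by
        rw [← pow_mul, pow_mul']; norm_num
      have h416 : (4:ℝ)^(j+1) ≤ (16:ℝ)^(j+1) := pow_le_pow_left₀ (by norm_num) (by norm_num) _
      calc ((ν:ℝ))^2 ≤ (4:ℝ)^(j+1) := by rw [← h44]; exact this
        _ ≤ (16:ℝ)^(j+1) := h416
        _ = 16 * (16:ℝ)^j := by rw [pow_succ]; ring
    -- finish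
    have hνpos : (0:ℝ) < (ν:ℝ)^2 := by
      have : (0:ℝ) < (ν:ℝ) := by exact_mod_cast hν
      positivity
    have h16pos : (0:ℝ) < (16:ℝ)^j := by positivity
    have final : C₀ * a N / (16:ℝ)^j ≤ 16 * C₀ * a N / (ν:ℝ)^2 := by
      rw [div_le_div_iff₀ h16pos hνpos]
      calc C₀ * a N * (ν:ℝ)^2 ≤ C₀ * a N * (16 * (16:ℝ)^j) :=
            mul_le_mul_of_nonneg_left hν2 (by positivity)
        _ = 16 * C₀ * a N * (16:ℝ)^j := by ring
    exact hd4.trans final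
  -- assemble
  refine ⟨16 * C₀ * S, by positivity, 2 * K + 64, ?_⟩
  intro N hN hNeven
  have hKN : K ≤ N := by omega
  have hN64 : 64 ≤ N := by omega
  have hN1 : 1 ≤ N := by omega
  have hNR : (0:ℝ) < (N:ℝ) := by exact_mod_cast hN1
  have haN : 0 < a N := ha N hN1
  have hfg : ∀ n : ℕ, ((n : ℝ) + 1) ^ 2 * a ((n + 1) * N) ≤
      (16 * C₀ * a N) * (1 / ((n : ℝ) + 1) ^ 2) := by
    intro n
    have h := hterm N hKN hN64 (n + 1) (by omega)
    have hcast : ((n + 1 : ℕ) : ℝ) = (n : ℝ) + 1 := by push_cast; ring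
    rw [hcast] at h
    calc ((n : ℝ) + 1) ^ 2 * a ((n + 1) * N) ≤ 16 * C₀ * a N / ((n : ℝ) + 1) ^ 2 := h
      _ = (16 * C₀ * a N) * (1 / ((n : ℝ) + 1) ^ 2) := by ring
  have hfnn : ∀ n : ℕ, 0 ≤ ((n : ℝ) + 1) ^ 2 * a ((n + 1) * N) := by
    intro n
    have : 0 < a ((n + 1) * N) := ha _ (Nat.mul_pos (by omega) hN1)
    positivity
  have hgsum : Summable (fun n : ℕ => (16 * C₀ * a N) * (1 / ((n : ℝ) + 1) ^ 2)) :=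
    hsum.mul_left _
  have hfsum : Summable (fun n : ℕ => ((n : ℝ) + 1) ^ 2 * a ((n + 1) * N)) :=
    Summable.of_nonneg_of_le hfnn hfg hgsum
  have hts : (∑' n : ℕ, ((n : ℝ) + 1) ^ 2 * a ((n + 1) * N)) ≤
      (16 * C₀ * a N) * S := by
    calc (∑' n : ℕ, ((n : ℝ) + 1) ^ 2 * a ((n + 1) * N))
        ≤ ∑' n : ℕ, (16 * C₀ * a N) * (1 / ((n : ℝ) + 1) ^ 2) :=
          Summable.tsum_le_tsum hfg hfsum hgsum
      _ = (16 * C₀ * a N) * S := by rw [tsum_mul_left]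
  -- a N ≤ a (N/2) / N
  obtain ⟨m, hm⟩ := hNeven
  have hmN : N / 2 = m := by omega
  have hm1 : 1 ≤ m := by omega
  have hKm : K ≤ m := by omega
  have hdm := hK m hKm hm1
  have h2m : 2 * m = N := by omega
  have haNle : a N ≤ a (N / 2) / (N : ℝ) := by
    rw [hmN, ← h2m]
    have : ((2 * m : ℕ) : ℝ) = 2 * (m : ℝ) := by push_cast; ring
    rw [this]
    exact hdm
  calc (∑' n : ℕ, ((n : ℝ) + 1) ^ 2 * a ((n + 1) * N)) ≤ (16 * C₀ * a N) * S := hts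
    _ ≤ (16 * C₀ * (a (N / 2) / (N : ℝ))) * S := by
        apply mul_le_mul_of_nonneg_right _ hSpos.le
        apply mul_le_mul_of_nonneg_left haNle (by positivity)
    _ = (16 * C₀ * S / (N : ℝ)) * a (N / 2) := by ring
end
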